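/- Let $n$ be a multiple of $4$, $n \geq 4$. Define $L : (\mathbb{Z}/n\mathbb{Z})^2 \to \{C,A,T\}$ by $L(x,y) = A$ if $x$ is even, $L(x,y) = C$ if $x \equiv 1 \pmod 4$, and $L(x,y) = T$ if $x \equiv 3 \pmod 4$. Then the number of occurrences of CAT (triples $p, p+v, p+2v$ with labels C, A, T, $v \in \{-1,0,1\}^2 \setminus \{0\}$) equals $(3/2) n^2$. -/

import Mathlib

open Finset

inductive Letter | C | A | T
deriving DecidableEq

theorem stmt_12 (n : ℕ) [NeZero n] (hn : 4 ≤ n) (h4 : 4 ∣ n)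
    (L : (Fin 2 → ZMod n) → Letter)
    (hL : ∀ p : Fin 2 → ZMod n,
      L p = if (p 0).val % 2 = 0 then Letter.A
            else if (p 0).val % 4 = 1 then Letter.C else Letter.T) :
    ((Finset.univ.filter
        (fun p : (Fin 2 → ZMod n) × (Fin 2 → ZMod n) =>
          (∀ j, p.2 j = 0 ∨ p.2 j = 1 ∨ p.2 j = -1) ∧ p.2 ≠ 0 ∧
          L p.1 = Letter.C ∧ L (p.1 + p.2) = Letter.A ∧
          L (p.1 + 2 • p.2) = Letter.T)).card : ℝ)
      = 3 / 2 * n ^ 2 := by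
  have hn4 : n % 4 = 0 := by omega
  -- basic cast facts
  have hcast : ∀ k : ℕ, k < n → ((k : ZMod n)).val = k := fun k hk => by
    rw [ZMod.val_natCast, Nat.mod_eq_of_lt hk]
  have hvalcast : ∀ x : ZMod n, ((x.val : ℕ) : ZMod n) = x := fun x =>
    ZMod.natCast_rightInverse x
  have hneg1 : (-1 : ZMod n) = ((n - 1 : ℕ) : ZMod n) := by
    rw [Nat.cast_sub (by omega)]; simp
  have hneg2 : (-2 : ZMod n) = ((n - 2 : ℕ) : ZMod n) := by
    rw [Nat.cast_sub (by omega)]; simp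
  have hvadd : ∀ (x : ZMod n) (k : ℕ), k < n → (x + (k : ZMod n)).val = (x.val + k) % n := by
    intro x k hk
    rw [ZMod.val_add, hcast k hk]
  have hmod4 : ∀ m : ℕ, m % n % 4 = m % 4 := fun m => Nat.mod_mod_of_dvd m h4
  have hmod2 : ∀ m : ℕ, m % n % 2 = m % 2 := fun m =>
    Nat.mod_mod_of_dvd m (dvd_trans (by norm_num) h4)
  have hvone : (1 : ZMod n).val = 1 := by
    rw [ZMod.val_one_eq_one_mod, Nat.mod_eq_of_lt (by omega)]
  have hone : (1 : ZMod n) ≠ 0 := by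
    intro h
    have := congrArg ZMod.val h
    rw [hvone, ZMod.val_zero] at this
    omega
  have hvneg1 : (-1 : ZMod n).val = n - 1 := by rw [hneg1, hcast _ (by omega)]
  have hvzero : (0 : ZMod n).val = 0 := ZMod.val_zero
  have h1neg1 : (1 : ZMod n) ≠ -1 := by
    intro h; have := congrArg ZMod.val h; rw [hvone, hvneg1] at this; omega
  have h0one : (0 : ZMod n) ≠ 1 := fun h => hone h.symm
  have h0neg1 : (0 : ZMod n) ≠ -1 := by
    intro h; have := congrArg ZMod.val h; rw [hvzero, hvneg1] at this; omega
  -- the target finset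
  set A : Finset (ZMod n) := univ.filter (fun x => x.val % 4 = 1) with hA
  have key : (Finset.univ.filter
        (fun p : (Fin 2 → ZMod n) × (Fin 2 → ZMod n) =>
          (∀ j, p.2 j = 0 ∨ p.2 j = 1 ∨ p.2 j = -1) ∧ p.2 ≠ 0 ∧
          L p.1 = Letter.C ∧ L (p.1 + p.2) = Letter.A ∧
          L (p.1 + 2 • p.2) = Letter.T)).card
      = (A ×ˢ (univ : Finset (ZMod n)) ×ˢ ({1, -1} : Finset (ZMod n))
          ×ˢ ({0, 1, -1} : Finset (ZMod n))).card := by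
    apply Finset.card_nbij' (fun p => (p.1 0, p.1 1, p.2 0, p.2 1))
      (fun q => (![q.1, q.2.1], ![q.2.2.1, q.2.2.2]))
    · -- forward
      intro p hp
      simp only [mem_coe, mem_filter, mem_univ, true_and] at hp
      obtain ⟨hv, hv0, hC, hAA, hT⟩ := hp
      rw [hL] at hC hAA
      simp only [Pi.add_apply] at hAA
      have h2 : (p.1 0).val % 4 = 1 := by
        by_contra h2
        by_cases h1 : (p.1 0).val % 2 = 0
        · rw [if_pos h1] at hC; exact Letter.noConfusion hC
        · rw [if_neg h1, if_neg h2] at hC; exact Letter.noConfusion hC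
      simp only [hA, mem_coe, mem_product, mem_filter, mem_univ, true_and, mem_insert, mem_singleton]
      refine ⟨h2, ?_, hv 1⟩
      rcases hv 0 with h | h | h
      · exfalso
        simp only [h, add_zero] at hAA
        rw [if_neg (by omega), if_pos h2] at hAA
        exact Letter.noConfusion hAA
      · exact Or.inl h
      · exact Or.inr h
    · -- backward
      intro q hq
      simp only [hA, mem_product, mem_filter, mem_univ, true_and, mem_insert, mem_singleton, mem_coe] at hq
      obtain ⟨hx, hc, hd⟩ := hq
      simp only [mem_coe, mem_filter, mem_univ, true_and]
      set x : ZMod n := q.1 with hxdef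
      refine ⟨?_, ?_, ?_, ?_, ?_⟩
      · intro j
        fin_cases j
        · simpa using Or.inr hc
        · simpa using hd
      · intro h
        have := congrFun h 0
        simp only [Matrix.cons_val_zero, Pi.zero_apply] at this
        rcases hc with h' | h'
        · rw [h'] at this; exact hone this
        · rw [h'] at this; exact h0neg1 this.symm
      · rw [hL]
        simp only [Matrix.cons_val_zero]
        simp only [show ¬ (x.val % 2 = 0) by omega, hx, ↓reduceIte]
      · rw [hL]
        simp only [Pi.add_apply, Matrix.cons_val_zero]
        rcases hc with h' | h' <;> simp only [h']
        · rw [show (1 : ZMod n) = ((1 : ℕ) : ZMod n) by simp,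
            hvadd _ _ (by omega)]
          rw [if_pos (by rw [hmod2]; omega)]
        · rw [hneg1, hvadd _ _ (by omega)]
          rw [if_pos (by rw [hmod2]; omega)]
      · rw [hL]
        simp only [Pi.add_apply, Pi.smul_apply, Matrix.cons_val_zero]
        rcases hc with h' | h' <;> simp only [h']
        · rw [show (2 : ℕ) • (1 : ZMod n) = ((2 : ℕ) : ZMod n) by push_cast; ring,
            hvadd _ _ (by omega)]
          rw [if_neg (by rw [hmod2]; omega), if_neg (by rw [hmod4]; omega)]
        · rw [show (2 : ℕ) • (-1 : ZMod n) = ((n - 2 : ℕ) : ZMod n) by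
            rw [← hneg2]; push_cast; ring,
            hvadd _ _ (by omega)]
          rw [if_neg (by rw [hmod2]; omega), if_neg (by rw [hmod4]; omega)]
    · -- left inverse
      intro p hp
      refine Prod.ext ?_ ?_ <;> (funext i; fin_cases i <;> rfl)
    · -- right inverse
      intro q hq
      rfl
  rw [key]
  have hcardA : A.card = n / 4 := by
    have : A.card = (Finset.range (n / 4)).card := by
      apply Finset.card_nbij' (fun x => x.val / 4) (fun k => ((4 * k + 1 : ℕ) : ZMod n))
      · intro x hx
        simp only [hA, mem_coe, mem_filter, mem_univ, true_and] at hx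
        have := ZMod.val_lt x
        simp only [mem_coe, mem_range]
        omega
      · intro k hk
        simp only [mem_coe, mem_range] at hk
        simp only [hA, mem_coe, mem_filter, mem_univ, true_and]
        rw [hcast _ (by omega)]
        omega
      · intro x hx
        simp only [hA, mem_coe, mem_filter, mem_univ, true_and] at hx
        dsimp only
        rw [show 4 * (x.val / 4) + 1 = x.val by omega, hvalcast]
      · intro k hk
        simp only [mem_coe, mem_range] at hk
        dsimp only
        rw [hcast _ (by omega)]
        omega
    rw [this, Finset.card_range]
  rw [Finset.card_product, Finset.card_product, Finset.card_product, hcardA,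
    Finset.card_univ, ZMod.card,
    Finset.card_insert_of_notMem (by simpa using h1neg1),
    Finset.card_singleton,
    Finset.card_insert_of_notMem (by simp [h0one, h0neg1]),
    Finset.card_insert_of_notMem (by simpa using h1neg1),
    Finset.card_singleton]
  obtain ⟨k, rfl⟩ := h4
  rw [Nat.mul_div_cancel_left k (by norm_num)]
  push_cast
  ring
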